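/- arXiv:2006.11571 — 6 statements merged into one kernel-verified Lean document; each statement's English description precedes it below -/
import Mathlib

section
/- For each natural number n ≥ 1, let D_n = {(x,y) ∈ ℝ² : x ≥ 0 and −n·x ≤ y ≤ n·x}, and let D = ⋃_n D_n. Then: (a) each D_n is linearly convex, i.e., for every point p ∈ ℝ² \ D_n there exists an affine line through p disjoint from D_n; (b) the point (0,1) does not belong to D, yet every affine line in ℝ² passing through (0,1) intersects D; hence D is not linearly convex. In particular, a union of an increasing sequence of linearly convex sets need not be linearly convex. -/
/-- The angular region `D_n = {(x,y) : x ≥ 0, -n·x ≤ y ≤ n·x}`. -/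
def Dseq (n : ℕ) : Set (ℝ × ℝ) :=
  {p | 0 ≤ p.1 ∧ -((n : ℝ) * p.1) ≤ p.2 ∧ p.2 ≤ (n : ℝ) * p.1}

/-- The union `D = ⋃_{n ≥ 1} D_n`. -/
def DU : Set (ℝ × ℝ) := ⋃ n ∈ {n : ℕ | 1 ≤ n}, Dseq n

/-- A set `E ⊆ ℝ²` is linearly convex if through each point of its complement there
passes an affine line disjoint from `E`. -/
def LinearlyConvex2 (E : Set (ℝ × ℝ)) : Prop :=
  ∀ p ∉ E, ∃ l : AffineSubspace ℝ (ℝ × ℝ),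
    Module.finrank ℝ l.direction = 1 ∧ p ∈ l ∧ (l : Set (ℝ × ℝ)) ∩ E = ∅

/-- The line through `p` in direction `v`. -/
lemma line_aux (p v : ℝ × ℝ) (hv : v ≠ 0) :
    ∃ l : AffineSubspace ℝ (ℝ × ℝ), Module.finrank ℝ l.direction = 1 ∧ p ∈ l ∧
      ∀ q ∈ l, ∃ t : ℝ, q = t • v + p := by
  refine ⟨AffineSubspace.mk' p (Submodule.span ℝ {v}), ?_,
    AffineSubspace.self_mem_mk' _ _, ?_⟩
  · rw [AffineSubspace.direction_mk']
    exact finrank_span_singleton hv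
  · intro q hq
    rw [AffineSubspace.mem_mk', Submodule.mem_span_singleton] at hq
    obtain ⟨t, ht⟩ := hq
    refine ⟨t, ?_⟩
    rw [ht]
    simp [vsub_eq_sub]

/-- (a) each `D_n` (for `n ≥ 1`) is linearly convex; (b) `(0,1) ∉ D` yet every affine
line through `(0,1)` meets `D`; hence `D` is not linearly convex: a union of an
increasing sequence of linearly convex sets need not be linearly convex. -/
theorem union_of_linearlyConvex_not_linearlyConvex :
    (∀ n : ℕ, 1 ≤ n → LinearlyConvex2 (Dseq n)) ∧
    ((0, 1) : ℝ × ℝ) ∉ DU ∧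
    (∀ l : AffineSubspace ℝ (ℝ × ℝ), Module.finrank ℝ l.direction = 1 →
      (((0 : ℝ), (1 : ℝ)) ∈ l) → ((l : Set (ℝ × ℝ)) ∩ DU).Nonempty) ∧
    ¬ LinearlyConvex2 DU := by
  have hnot : ((0, 1) : ℝ × ℝ) ∉ DU := by
    simp only [DU, Set.mem_iUnion, Set.mem_setOf_eq]
    rintro ⟨n, hn, h⟩
    simp only [Dseq, Set.mem_setOf_eq] at h
    obtain ⟨-, -, h2⟩ := h
    norm_num at h2
  have hmeets : ∀ l : AffineSubspace ℝ (ℝ × ℝ), Module.finrank ℝ l.direction = 1 →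
      (((0 : ℝ), (1 : ℝ)) ∈ l) → ((l : Set (ℝ × ℝ)) ∩ DU).Nonempty := by
    intro l hrank h01
    have hdir : l.direction ≠ ⊥ := by
      intro h
      rw [h] at hrank
      simp at hrank
    obtain ⟨v, hvmem, hv⟩ := Submodule.exists_mem_ne_zero_of_ne_bot hdir
    by_cases ha : v.1 = 0
    · -- vertical line; (0,0) is on it
      have hb : v.2 ≠ 0 := by
        intro hb; apply hv; exact Prod.ext ha hb
      have hq : (-(v.2)⁻¹) • v +ᵥ ((0 : ℝ), (1 : ℝ)) ∈ l :=
        AffineSubspace.vadd_mem_of_mem_direction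
          (Submodule.smul_mem _ _ hvmem) h01
      have hqeq : (-(v.2)⁻¹) • v +ᵥ ((0 : ℝ), (1 : ℝ)) = ((0 : ℝ), (0 : ℝ)) := by
        have hrfl : (-(v.2)⁻¹) • v +ᵥ ((0 : ℝ), (1 : ℝ))
            = (-(v.2)⁻¹ * v.1 + 0, -(v.2)⁻¹ * v.2 + 1) := rfl
        rw [hrfl, ha]
        have : -(v.2)⁻¹ * v.2 = -1 := by field_simp
        rw [this]; norm_num
      refine ⟨((0 : ℝ), (0 : ℝ)), ?_, ?_⟩
      · rw [← hqeq]; exact hq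
      · simp only [DU, Set.mem_iUnion, Set.mem_setOf_eq]
        exact ⟨1, le_refl 1, by simp [Dseq]⟩
    · -- take t = v.1⁻¹ ; point (1, 1 + v.2/v.1)
      set y : ℝ := 1 + v.2 / v.1 with hy
      have hq : ((v.1)⁻¹) • v +ᵥ ((0 : ℝ), (1 : ℝ)) ∈ l :=
        AffineSubspace.vadd_mem_of_mem_direction
          (Submodule.smul_mem _ _ hvmem) h01
      have hqeq : ((v.1)⁻¹) • v +ᵥ ((0 : ℝ), (1 : ℝ)) = ((1 : ℝ), y) := by
        have hrfl : ((v.1)⁻¹) • v +ᵥ ((0 : ℝ), (1 : ℝ))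
            = ((v.1)⁻¹ * v.1 + 0, (v.1)⁻¹ * v.2 + 1) := rfl
        rw [hrfl, inv_mul_cancel₀ ha]
        have : (v.1)⁻¹ * v.2 = v.2 / v.1 := by field_simp
        rw [this]; norm_num [hy, add_comm]
      set n : ℕ := ⌈|y|⌉₊ + 1 with hn
      have hyn : |y| ≤ (n : ℝ) := by
        push_cast [hn]
        exact le_trans (Nat.le_ceil _) (by linarith)
      refine ⟨((1 : ℝ), y), ?_, ?_⟩
      · rw [← hqeq]; exact hq
      · simp only [DU, Set.mem_iUnion, Set.mem_setOf_eq]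
        refine ⟨n, by omega, ?_⟩
        rw [abs_le] at hyn
        simp only [Dseq, Set.mem_setOf_eq]
        constructor
        · norm_num
        · constructor <;> [linarith [hyn.1]; linarith [hyn.2]]
  refine ⟨?_, hnot, hmeets, ?_⟩
  · -- part (a)
    intro n hn p hp
    simp only [Dseq, Set.mem_setOf_eq, not_and_or, not_le] at hp
    rcases hp with hx | hp'
    · -- p.1 < 0 : vertical line
      obtain ⟨l, h1, h2, h3⟩ := line_aux p ((0 : ℝ), (1 : ℝ)) (by norm_num)
      refine ⟨l, h1, h2, Set.eq_empty_iff_forall_notMem.mpr ?_⟩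
      rintro q ⟨hql, hqD⟩
      obtain ⟨t, ht⟩ := h3 q hql
      have : q.1 = p.1 := by rw [ht]; simp [mul_comm]
      have : (0 : ℝ) ≤ q.1 := hqD.1
      linarith [hx, this.trans_eq ‹q.1 = p.1›]
    · rcases hp' with hlow | hhigh
      · -- p.2 < -(n p.1) : line in direction (1, -n)
        obtain ⟨l, h1, h2, h3⟩ := line_aux p ((1 : ℝ), -(n : ℝ)) (by
          intro h; exact one_ne_zero (congrArg Prod.fst h))
        refine ⟨l, h1, h2, Set.eq_empty_iff_forall_notMem.mpr ?_⟩
        rintro q ⟨hql, hqD⟩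
        obtain ⟨t, ht⟩ := h3 q hql
        have h1' : q.1 = t + p.1 := by rw [ht]; simp [mul_comm]
        have h2' : q.2 = -(n : ℝ) * t + p.2 := by rw [ht]; simp [mul_comm]
        have := hqD.2.1
        nlinarith [hqD.2.1]
      · -- p.2 > n p.1 : line in direction (1, n)
        obtain ⟨l, h1, h2, h3⟩ := line_aux p ((1 : ℝ), (n : ℝ)) (by
          intro h; exact one_ne_zero (congrArg Prod.fst h))
        refine ⟨l, h1, h2, Set.eq_empty_iff_forall_notMem.mpr ?_⟩
        rintro q ⟨hql, hqD⟩
        obtain ⟨t, ht⟩ := h3 q hql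
        have h1' : q.1 = t + p.1 := by rw [ht]; simp [mul_comm]
        have h2' : q.2 = (n : ℝ) * t + p.2 := by rw [ht]; simp [mul_comm]
        nlinarith [hqD.2.2]
  · -- (not linearly convex)
    intro h
    obtain ⟨l, hl1, hl2, hl3⟩ := h ((0 : ℝ), (1 : ℝ)) hnot
    have := hmeets l hl1 hl2
    rw [hl3] at this
    exact Set.not_nonempty_empty this
end

section
/- Let n be a natural number, W a set of affine subspaces of ℝⁿ, E ⊆ ℝⁿ a compact set, and (D_k)_{k∈ℕ} a sequence of open sets approximating E from outside, i.e., D_{k+1} ⊆ D_k for all k, E = ⋂_k D_k, and every open set U containing E contains D_k for some k. Then E* = ⋃_k D_k* and E** = ⋂_k D_k**. -/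
/-- The conjugate set `E* = {l ∈ W | l ∩ E = ∅}` of a set `E ⊆ ℝⁿ` relative to a
set `W` of affine subspaces of `ℝⁿ`. -/
def conjSet {n : ℕ} (W : Set (AffineSubspace ℝ (EuclideanSpace ℝ (Fin n))))
    (E : Set (EuclideanSpace ℝ (Fin n))) :
    Set (AffineSubspace ℝ (EuclideanSpace ℝ (Fin n))) :=
  {l | l ∈ W ∧ (l : Set (EuclideanSpace ℝ (Fin n))) ∩ E = ∅}

/-- The double conjugate `E** = ℝⁿ \ ⋃ {l : l ∈ E*}`. -/
def biconjSet {n : ℕ} (W : Set (AffineSubspace ℝ (EuclideanSpace ℝ (Fin n))))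
    (E : Set (EuclideanSpace ℝ (Fin n))) : Set (EuclideanSpace ℝ (Fin n)) :=
  (⋃ l ∈ conjSet W E, (l : Set (EuclideanSpace ℝ (Fin n))))ᶜ

/-- If a compact `E` is approximated from outside by a sequence of open sets `D k`,
then `E* = ⋃ k, (D k)*` and `E** = ⋂ k, (D k)**`. -/
theorem conjSet_biconjSet_of_outer_approx {n : ℕ}
    (W : Set (AffineSubspace ℝ (EuclideanSpace ℝ (Fin n))))
    (E : Set (EuclideanSpace ℝ (Fin n))) (hE : IsCompact E)
    (D : ℕ → Set (EuclideanSpace ℝ (Fin n)))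
    (hopen : ∀ k, IsOpen (D k))
    (hmono : ∀ k, D (k + 1) ⊆ D k)
    (hinter : E = ⋂ k, D k)
    (happrox : ∀ U : Set (EuclideanSpace ℝ (Fin n)), IsOpen U → E ⊆ U → ∃ k, D k ⊆ U) :
    conjSet W E = (⋃ k, conjSet W (D k)) ∧ biconjSet W E = ⋂ k, biconjSet W (D k) := by
  have hED : ∀ k, E ⊆ D k := by
    intro k
    rw [hinter]
    exact Set.iInter_subset _ k
  have key : conjSet W E = (⋃ k, conjSet W (D k)) := by
    ext l
    constructor
    · rintro ⟨hlW, hl⟩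
      have hcl : IsClosed (l : Set (EuclideanSpace ℝ (Fin n))) :=
        l.closed_of_finiteDimensional
      have hEsub : E ⊆ (l : Set (EuclideanSpace ℝ (Fin n)))ᶜ := by
        intro x hx hxl
        exact absurd hl (Set.nonempty_iff_ne_empty.1 ⟨x, hxl, hx⟩)
      obtain ⟨k, hk⟩ := happrox _ hcl.isOpen_compl hEsub
      refine Set.mem_iUnion.2 ⟨k, hlW, ?_⟩
      rw [Set.eq_empty_iff_forall_notMem]
      rintro x ⟨hxl, hxD⟩
      exact hk hxD hxl
    · intro hl
      obtain ⟨k, hlW, hk⟩ := Set.mem_iUnion.1 hl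
      refine ⟨hlW, ?_⟩
      rw [Set.eq_empty_iff_forall_notMem] at hk ⊢
      rintro x ⟨hxl, hxE⟩
      exact hk x ⟨hxl, hED k hxE⟩
  refine ⟨key, ?_⟩
  unfold biconjSet
  rw [key, ← Set.compl_iUnion]
  congr 1
  ext x
  simp only [Set.mem_iUnion]
  constructor
  · rintro ⟨l, ⟨k, hlk⟩, hx⟩
    exact ⟨k, l, hlk, hx⟩
  · rintro ⟨k, l, hlk, hx⟩
    exact ⟨l, ⟨k, hlk⟩, hx⟩
end

section
/- Let n be a natural number, W a set of affine subspaces of ℝⁿ, and D ⊆ ℝⁿ a nonempty connected open set that is weakly convex relative to W, i.e., for every point x of the frontier of D there exists l ∈ W with x ∈ l and l ∩ D = ∅. Then D is a connected component of the set D** (which is convex relative to W). -/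
/-- A set `E ⊆ ℝⁿ` is convex relative to a set `W` of affine subspaces of `ℝⁿ` if
through every point of its complement there passes an element of `W` disjoint from `E`. -/
def ConvexRel {n : ℕ} (W : Set (AffineSubspace ℝ (EuclideanSpace ℝ (Fin n))))
    (E : Set (EuclideanSpace ℝ (Fin n))) : Prop :=
  ∀ x ∉ E, ∃ l ∈ W, x ∈ l ∧ (l : Set (EuclideanSpace ℝ (Fin n))) ∩ E = ∅


/-- A preconnected set meeting both an open set and its complement meets its frontier. -/
lemma preconnected_inter_frontier {X : Type*} [TopologicalSpace X] {C D : Set X}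
    (hC : IsPreconnected C) (h1 : (C ∩ D).Nonempty) (h2 : (C \ D).Nonempty)
    (hD : IsOpen D) : (C ∩ frontier D).Nonempty := by
  by_contra h
  rw [Set.not_nonempty_iff_eq_empty] at h
  have hfr : ∀ x ∈ C, x ∉ frontier D := fun x hx hf =>
    Set.eq_empty_iff_forall_notMem.mp h x ⟨hx, hf⟩
  have hsub : C ⊆ D ∪ (closure D)ᶜ := by
    intro x hx
    by_cases hxD : x ∈ D
    · exact Or.inl hxD
    · exact Or.inr fun hxc => hfr x hx ⟨hxc, by rwa [hD.interior_eq]⟩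
  have h2' : (C ∩ (closure D)ᶜ).Nonempty := by
    obtain ⟨y, hyC, hyD⟩ := h2
    exact ⟨y, hyC, fun hyc => hfr y hyC ⟨hyc, by rwa [hD.interior_eq]⟩⟩
  obtain ⟨z, hz⟩ := hC D (closure D)ᶜ hD isClosed_closure.isOpen_compl hsub h1 h2'
  exact hz.2.2 (subset_closure hz.2.1)

/-- Every nonempty connected open set `D` that is weakly convex relative to `W`
is a connected component of the set `D**`, which is itself convex relative to `W`. -/
theorem weaklyConvex_open_isComponent_biconj {n : ℕ}
    (W : Set (AffineSubspace ℝ (EuclideanSpace ℝ (Fin n))))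
    (D : Set (EuclideanSpace ℝ (Fin n)))
    (hopen : IsOpen D) (hconn : IsConnected D)
    (hweak : ∀ x ∈ frontier D, ∃ l ∈ W, x ∈ l ∧ (l : Set (EuclideanSpace ℝ (Fin n))) ∩ D = ∅) :
    ConvexRel W (biconjSet W D) ∧
      ∃ x ∈ D, connectedComponentIn (biconjSet W D) x = D := by
  obtain ⟨⟨x0, hx0⟩, hpre⟩ := hconn
  have hDsub : D ⊆ biconjSet W D := by
    intro y hy hmem
    obtain ⟨l, hl, hyl⟩ := Set.mem_iUnion₂.mp hmem
    exact Set.eq_empty_iff_forall_notMem.mp hl.2 y ⟨hyl, hy⟩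
  constructor
  · intro x hx
    have : x ∈ ⋃ l ∈ conjSet W D, (l : Set (EuclideanSpace ℝ (Fin n))) := by
      simpa [biconjSet] using hx
    obtain ⟨l, hl, hxl⟩ := Set.mem_iUnion₂.mp this
    refine ⟨l, hl.1, hxl, Set.eq_empty_iff_forall_notMem.mpr fun y ⟨hyl, hyB⟩ => ?_⟩
    exact hyB (Set.mem_iUnion₂.mpr ⟨l, hl, hyl⟩)
  · refine ⟨x0, hx0, ?_⟩
    apply Set.Subset.antisymm
    · intro y hy
      by_contra hyD
      have hCsub := connectedComponentIn_subset (biconjSet W D) x0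
      have hCconn : IsPreconnected (connectedComponentIn (biconjSet W D) x0) :=
        isPreconnected_connectedComponentIn
      have hx0C : x0 ∈ connectedComponentIn (biconjSet W D) x0 :=
        mem_connectedComponentIn (hDsub hx0)
      obtain ⟨z, hzC, hzf⟩ := preconnected_inter_frontier hCconn ⟨x0, hx0C, hx0⟩
        ⟨y, hy, hyD⟩ hopen
      obtain ⟨l, hlW, hzl, hlD⟩ := hweak z hzf
      exact hCsub hzC (Set.mem_iUnion₂.mpr ⟨l, ⟨hlW, hlD⟩, hzl⟩)
    · exact hpre.subset_connectedComponentIn hx0 hDsub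
end

section
/- Let n be a natural number, W a set of affine subspaces of ℝⁿ, U ⊆ ℝⁿ an open set convex relative to W, and C a connected component of U. Then C is weakly convex relative to W: for every point x of the frontier of C there exists l ∈ W with x ∈ l and l ∩ C = ∅. -/
/-- Every connected component of an open set convex relative to `W` is weakly convex
relative to `W`: through every point of its frontier passes an element of `W` disjoint
from the component. -/
theorem component_of_convexRel_open_weaklyConvex {n : ℕ}
    (W : Set (AffineSubspace ℝ (EuclideanSpace ℝ (Fin n))))
    (U : Set (EuclideanSpace ℝ (Fin n)))
    (hopen : IsOpen U) (hconv : ConvexRel W U)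
    (C : Set (EuclideanSpace ℝ (Fin n)))
    (hC : ∃ x ∈ U, C = connectedComponentIn U x) :
    ∀ x ∈ frontier C, ∃ l ∈ W, x ∈ l ∧ (l : Set (EuclideanSpace ℝ (Fin n))) ∩ C = ∅ := by
  obtain ⟨x₀, hx₀U, rfl⟩ := hC
  intro x hx
  set C := connectedComponentIn U x₀ with hCdef
  have hCsub : C ⊆ U := connectedComponentIn_subset U x₀
  have hCopen : IsOpen C := hopen.connectedComponentIn
  have hxnC : x ∉ C := by
    intro h
    exact hx.2 (by simpa [hCopen.interior_eq] using h)
  have hxnU : x ∉ U := by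
    intro hxU
    have hopen' : IsOpen (connectedComponentIn U x) := hopen.connectedComponentIn
    have hxcl : x ∈ closure C := hx.1
    have hmem : x ∈ connectedComponentIn U x := mem_connectedComponentIn hxU
    obtain ⟨z, hz1, hz2⟩ := mem_closure_iff.mp hxcl _ hopen' hmem
    have h1 : connectedComponentIn U x = connectedComponentIn U z :=
      connectedComponentIn_eq hz1
    have h2 : connectedComponentIn U x₀ = connectedComponentIn U z :=
      connectedComponentIn_eq hz2
    exact hxnC (by rw [hCdef, h2, ← h1]; exact hmem)
  obtain ⟨l, hlW, hxl, hlU⟩ := hconv x hxnU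
  refine ⟨l, hlW, hxl, Set.eq_empty_of_subset_empty ?_⟩
  rw [← hlU]
  exact Set.inter_subset_inter_right _ hCsub
end

section
/- Let n be a natural number, W a set of affine subspaces of ℝⁿ, and K ⊆ ℝⁿ a nonempty connected compact set that is approximated from outside by a sequence (D_k)_{k∈ℕ} of open sets, each weakly convex relative to W (for every x in the frontier of D_k there is l ∈ W with x ∈ l and l ∩ D_k = ∅), with D_{k+1} ⊆ D_k for all k, K = ⋂_k D_k, and every open set U containing K contains some D_k. Then K is a connected component of the set K**. -/
lemma preconn_inter_frontier {X : Type*} [TopologicalSpace X] {s u : Set X}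
    (hs : IsPreconnected s) (hu : IsOpen u) (h1 : (s ∩ u).Nonempty)
    (h2 : (s \ u).Nonempty) : (s ∩ frontier u).Nonempty := by
  by_contra h
  rw [Set.not_nonempty_iff_eq_empty] at h
  have hmemf : ∀ z ∈ s, z ∉ u → z ∉ closure u := by
    intro z hz hzu hzc
    exact Set.eq_empty_iff_forall_notMem.mp h z
      ⟨hz, ⟨hzc, by rwa [hu.interior_eq]⟩⟩
  have hsub : s ⊆ u ∪ (closure u)ᶜ := by
    intro z hz
    by_cases hzu : z ∈ u
    · exact Or.inl hzu
    · exact Or.inr (hmemf z hz hzu)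
  obtain ⟨z2, hz2⟩ := h2
  obtain ⟨w, hws, hwu, hwc⟩ := hs u (closure u)ᶜ hu isClosed_closure.isOpen_compl hsub h1
    ⟨z2, hz2.1, hmemf z2 hz2.1 hz2.2⟩
  exact hwc (subset_closure hwu)

/-- Every nonempty connected compact `K`, approximated from outside by a decreasing
sequence of weakly convex open sets, is a connected component of `K**`. -/
theorem weaklyConvex_compact_isComponent_biconj {n : ℕ}
    (W : Set (AffineSubspace ℝ (EuclideanSpace ℝ (Fin n))))
    (K : Set (EuclideanSpace ℝ (Fin n)))
    (hK : IsCompact K) (hconn : IsConnected K)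
    (D : ℕ → Set (EuclideanSpace ℝ (Fin n)))
    (hopen : ∀ k, IsOpen (D k))
    (hweak : ∀ k, ∀ x ∈ frontier (D k),
      ∃ l ∈ W, x ∈ l ∧ (l : Set (EuclideanSpace ℝ (Fin n))) ∩ D k = ∅)
    (hmono : ∀ k, D (k + 1) ⊆ D k)
    (hinter : K = ⋂ k, D k)
    (happrox : ∀ U : Set (EuclideanSpace ℝ (Fin n)), IsOpen U → K ⊆ U → ∃ k, D k ⊆ U) :
    ∃ x ∈ K, connectedComponentIn (biconjSet W K) x = K := by
  obtain ⟨⟨x, hxK⟩, hKpre⟩ := hconn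
  -- K is contained in its biconjugate
  have hKsub : K ⊆ biconjSet W K := by
    intro y hy
    simp only [biconjSet, Set.mem_compl_iff, Set.mem_iUnion]
    rintro ⟨l, ⟨hlW, hl⟩, hyl⟩
    exact Set.eq_empty_iff_forall_notMem.mp hl y ⟨hyl, hy⟩
  have hxB : x ∈ biconjSet W K := hKsub hxK
  refine ⟨x, hxK, Set.Subset.antisymm ?_ (hKpre.subset_connectedComponentIn hxK hKsub)⟩
  -- the component is contained in K
  intro y hy
  by_contra hyK
  have hyDk : ∃ k, y ∉ D k := by
    by_contra h
    push_neg at h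
    exact hyK (hinter ▸ Set.mem_iInter.mpr h)
  obtain ⟨k, hyDk⟩ := hyDk
  have hKD : K ⊆ D k := hinter ▸ Set.iInter_subset D k
  have hCpre : IsPreconnected (connectedComponentIn (biconjSet W K) x) :=
    (isPreconnected_connectedComponentIn)
  have hxC : x ∈ connectedComponentIn (biconjSet W K) x := mem_connectedComponentIn hxB
  have hfront : (connectedComponentIn (biconjSet W K) x ∩ frontier (D k)).Nonempty :=
    preconn_inter_frontier hCpre (hopen k) ⟨x, hxC, hKD hxK⟩ ⟨y, hy, hyDk⟩
  obtain ⟨z, hzC, hzF⟩ := hfront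
  obtain ⟨l, hlW, hzl, hlD⟩ := hweak k z hzF
  have hlK : (l : Set (EuclideanSpace ℝ (Fin n))) ∩ K = ∅ := by
    apply Set.eq_empty_iff_forall_notMem.mpr
    rintro w ⟨hwl, hwK⟩
    exact Set.eq_empty_iff_forall_notMem.mp hlD w ⟨hwl, hKD hwK⟩
  have hzB : z ∈ biconjSet W K := connectedComponentIn_subset _ _ hzC
  exact hzB (Set.mem_iUnion.mpr ⟨l, Set.mem_iUnion.mpr ⟨⟨hlW, hlK⟩, hzl⟩⟩)
end

section
/- Let D = {x = (x₁,x₂,x₃) ∈ ℝ³ : 1 < |x₁| + |x₃| < 3 and 0 < x₂ < 1}. Then for every point p ∈ ℝ³ \ D there exists an affine line through p, parallel to the x₁-axis or parallel to the x₂-axis, that is disjoint from D. In particular, D is convex relative to the family of affine lines in ℝ³ whose direction is contained in the plane {x : x₃ = 0}. -/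
/-- The bounded nonsmooth domain
`D = {x ∈ ℝ³ : 1 < |x₁| + |x₃| < 3, 0 < x₂ < 1}`. -/
def Dtorus : Set (EuclideanSpace ℝ (Fin 3)) :=
  {x | 1 < |x 0| + |x 2| ∧ |x 0| + |x 2| < 3 ∧ 0 < x 1 ∧ x 1 < 1}

lemma single_ne_zero' (i : Fin 3) : EuclideanSpace.single i (1 : ℝ) ≠ 0 := by
  intro h
  have := congrArg (fun v => v i) h
  simp [EuclideanSpace.single_apply] at this

lemma mem_span_single {i : Fin 3} {v : EuclideanSpace ℝ (Fin 3)}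
    (hv : v ∈ Submodule.span ℝ {EuclideanSpace.single (i : Fin 3) (1 : ℝ)})
    {j : Fin 3} (hj : j ≠ i) : v j = 0 := by
  rcases Submodule.mem_span_singleton.1 hv with ⟨c, rfl⟩
  simp [EuclideanSpace.single_apply, hj]

lemma torus_key : ∀ p ∉ Dtorus, ∃ l : AffineSubspace ℝ (EuclideanSpace ℝ (Fin 3)),
      (l.direction = Submodule.span ℝ {EuclideanSpace.single (0 : Fin 3) (1 : ℝ)} ∨
       l.direction = Submodule.span ℝ {EuclideanSpace.single (1 : Fin 3) (1 : ℝ)}) ∧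
      p ∈ l ∧ (l : Set (EuclideanSpace ℝ (Fin 3))) ∩ Dtorus = ∅ := by
  intro p hp
  by_cases h : 1 < |p 0| + |p 2| ∧ |p 0| + |p 2| < 3
  · -- then x₂-condition fails; use line parallel to x₂-axis? No: use x₂-axis line keeps x0,x2...
    -- here ¬(0 < p 1 < 1); line in direction e0 keeps x1 fixed.
    have h1 : ¬ (0 < p 1 ∧ p 1 < 1) := by
      intro h1; exact hp ⟨h.1, h.2, h1.1, h1.2⟩
    refine ⟨AffineSubspace.mk' p (Submodule.span ℝ {EuclideanSpace.single (0 : Fin 3) (1 : ℝ)}),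
      Or.inl (AffineSubspace.direction_mk' _ _), AffineSubspace.self_mem_mk' _ _, ?_⟩
    ext x
    simp only [Set.mem_inter_iff, Set.mem_empty_iff_false, iff_false, not_and]
    intro hx hxD
    have hmem : x -ᵥ p ∈ Submodule.span ℝ {EuclideanSpace.single (0 : Fin 3) (1 : ℝ)} :=
      (AffineSubspace.mem_mk').1 hx
    have hx1 : (x -ᵥ p) 1 = 0 := mem_span_single hmem (by decide)
    have : x 1 = p 1 := by
      have : x 1 - p 1 = 0 := hx1
      linarith
    exact h1 ⟨this ▸ hxD.2.2.1, this ▸ hxD.2.2.2⟩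
  · refine ⟨AffineSubspace.mk' p (Submodule.span ℝ {EuclideanSpace.single (1 : Fin 3) (1 : ℝ)}),
      Or.inr (AffineSubspace.direction_mk' _ _), AffineSubspace.self_mem_mk' _ _, ?_⟩
    ext x
    simp only [Set.mem_inter_iff, Set.mem_empty_iff_false, iff_false, not_and]
    intro hx hxD
    have hmem : x -ᵥ p ∈ Submodule.span ℝ {EuclideanSpace.single (1 : Fin 3) (1 : ℝ)} :=
      (AffineSubspace.mem_mk').1 hx
    have hx0 : (x -ᵥ p) 0 = 0 := mem_span_single hmem (by decide)
    have hx2 : (x -ᵥ p) 2 = 0 := mem_span_single hmem (by decide)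
    have e0 : x 0 = p 0 := by have : x 0 - p 0 = 0 := hx0; linarith
    have e2 : x 2 = p 2 := by have : x 2 - p 2 = 0 := hx2; linarith
    exact h ⟨e0 ▸ e2 ▸ hxD.1, e0 ▸ e2 ▸ hxD.2.1⟩

/-- Through every point of the complement of `Dtorus` there passes an affine line
parallel to the `x₁`-axis or to the `x₂`-axis and disjoint from `Dtorus`; in
particular `Dtorus` is convex relative to the family of affine lines whose direction
lies in the plane `{x | x₃ = 0}`. -/
theorem torus_example_linearly_convex :
    (∀ p ∉ Dtorus, ∃ l : AffineSubspace ℝ (EuclideanSpace ℝ (Fin 3)),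
      (l.direction = Submodule.span ℝ {EuclideanSpace.single (0 : Fin 3) (1 : ℝ)} ∨
       l.direction = Submodule.span ℝ {EuclideanSpace.single (1 : Fin 3) (1 : ℝ)}) ∧
      p ∈ l ∧ (l : Set (EuclideanSpace ℝ (Fin 3))) ∩ Dtorus = ∅) ∧
    (∀ p ∉ Dtorus, ∃ l : AffineSubspace ℝ (EuclideanSpace ℝ (Fin 3)),
      Module.finrank ℝ l.direction = 1 ∧ (∀ v ∈ l.direction, v 2 = 0) ∧
      p ∈ l ∧ (l : Set (EuclideanSpace ℝ (Fin 3))) ∩ Dtorus = ∅) := by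
  refine ⟨torus_key, fun p hp => ?_⟩
  obtain ⟨l, hdir, hpl, hdisj⟩ := torus_key p hp
  refine ⟨l, ?_, ?_, hpl, hdisj⟩
  · rcases hdir with h | h <;> rw [h] <;> exact finrank_span_singleton (single_ne_zero' _)
  · intro v hv
    rcases hdir with h | h <;> rw [h] at hv <;> exact mem_span_single hv (by decide)
end
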